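/- arXiv:2202.10766 — 4 statements merged into one kernel-verified Lean document; each statement's English description precedes it below -/
import Mathlib

section
/- The seminaive execution provenance semantics equals the hereditary-minimal-depth-tree semantics: for every Datalog program Σ, annotated database (D,K,λ) over a commutative semiring K, and fact α, SNE(Σ,D,K,λ,α) = HMDT(Σ,D,K,λ,α). -/
attribute [local instance] Classical.propDecidable

namespace Datalog

/-- Terms are built from constants and variables. -/
inductive Term (C V : Type) : Type
  | const : C → Term C V
  | var : V → Term C V

/-- An atom over predicates `P` with arguments of type `τ`. -/
structure Atom (P τ : Type) : Type where
  pred : P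
  args : List τ

/-- A fact (ground atom) has constants as arguments. -/
abbrev Fact (P C : Type) := Atom P C

/-- Substitution of a variable assignment in a term. -/
def Term.subst {C : Type} {n : ℕ} (σ : Fin n → C) : Term C (Fin n) → C
  | Term.const c => c
  | Term.var v => σ v

/-- Substitution of a variable assignment in an atom, producing a fact. -/
def Atom.subst {P C : Type} {n : ℕ} (σ : Fin n → C) (a : Atom P (Term C (Fin n))) : Fact P C :=
  ⟨a.pred, a.args.map (Term.subst σ)⟩

/-- Renaming of predicates in an atom. -/
def Atom.mapPred {P Q τ : Type} (f : P → Q) (a : Atom P τ) : Atom Q τ := ⟨f a.pred, a.args⟩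

/-- Turn a fact into a (ground) rule atom. -/
def Atom.toRuleAtom {P C : Type} (n : ℕ) (a : Fact P C) : Atom P (Term C (Fin n)) :=
  ⟨a.pred, a.args.map Term.const⟩

/-- A (normalized) Datalog rule `φ(x⃗,y⃗) → H(x⃗)`: the body is a conjunction of atoms over
variables `x⃗ ∪ y⃗` (every variable of the rule occurs in the body), the head a single atom. -/
structure Rule (P C : Type) : Type where
  nvars : ℕ
  nbody : ℕ
  body : Fin nbody → Atom P (Term C (Fin nvars))
  head : Atom P (Term C (Fin nvars))
  vars_in_body : ∀ v : Fin nvars, ∃ i : Fin nbody, Term.var v ∈ (body i).args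

variable {P C K : Type}

/-- A set of facts is closed under the rules of a program. -/
def ClosedUnder (prog : Set (Rule P C)) (I : Set (Fact P C)) : Prop :=
  ∀ r ∈ prog, ∀ σ : Fin r.nvars → C,
    (∀ i, (r.body i).subst σ ∈ I) → r.head.subst σ ∈ I

/-- `Σ, D ⊨ α` : the fact `α` belongs to every set of facts containing `D`
and closed under the rules of `Σ`. -/
def Entails (prog : Set (Rule P C)) (D : Set (Fact P C)) (a : Fact P C) : Prop :=
  ∀ I : Set (Fact P C), D ⊆ I → ClosedUnder prog I → a ∈ I

/-- Derivation trees of a fact w.r.t. a program and a database: leaves are labeled by facts of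
`D`; an inner node is labeled by a rule `r ∈ Σ` together with a homomorphism `σ`, its children
corresponding bijectively to the body atoms of `r`, and derives the fact `σ(head r)`. -/
inductive DTree {P C : Type} (prog : Set (Rule P C)) (D : Set (Fact P C)) : Fact P C → Type
  | leaf (a : Fact P C) (ha : a ∈ D) : DTree prog D a
  | node (r : Rule P C) (hr : r ∈ prog) (σ : Fin r.nvars → C)
      (children : ∀ i : Fin r.nbody, DTree prog D ((r.body i).subst σ)) :
      DTree prog D (r.head.subst σ)

namespace DTree

variable {prog : Set (Rule P C)} {D : Set (Fact P C)}

/-- `Λ(t)`: the product of the annotations of the leaves of `t`. -/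
def weight [CommSemiring K] (lam : Fact P C → K) : ∀ {a : Fact P C}, DTree prog D a → K
  | _, .leaf a _ => lam a
  | _, .node r _ _ ch => ∏ i : Fin r.nbody, weight lam (ch i)

/-- The depth of a derivation tree. -/
def depth : ∀ {a : Fact P C}, DTree prog D a → ℕ
  | _, .leaf _ _ => 0
  | _, .node r _ _ ch => (Finset.univ.sup fun i : Fin r.nbody => depth (ch i)) + 1

/-- A derivation tree of `a` is of minimal depth if no derivation tree of `a` is of
smaller depth. -/
def minimalDepth {a : Fact P C} (t : DTree prog D a) : Prop :=
  ∀ t' : DTree prog D a, t.depth ≤ t'.depth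

/-- A derivation tree is hereditary minimal-depth if every subtree rooted at an inner node
is a minimal-depth derivation tree of the fact it derives. -/
def hereditaryMinimal : ∀ {a : Fact P C}, DTree prog D a → Prop
  | _, .leaf _ _ => True
  | _, .node r hr σ ch =>
      minimalDepth (.node r hr σ ch) ∧ ∀ i, hereditaryMinimal (ch i)

/-- `t.avoid s` : no fact labeling a node of `t` belongs to `s`, nor is repeated along a
root-to-leaf path. -/
def avoid : Set (Fact P C) → ∀ {a : Fact P C}, DTree prog D a → Prop
  | s, _, .leaf a _ => a ∉ s
  | s, _, .node r _ σ ch =>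
      r.head.subst σ ∉ s ∧ ∀ i, avoid (insert (r.head.subst σ) s) (ch i)

/-- A derivation tree is non-recursive if it does not contain two nodes labeled with the same
fact such that one is a descendant of the other. -/
def nonRecursive {a : Fact P C} (t : DTree prog D a) : Prop := t.avoid ∅

/-- `t.hasLeaf x` : `x` labels some leaf of `t`. -/
def hasLeaf (x : Fact P C) : ∀ {a : Fact P C}, DTree prog D a → Prop
  | _, .leaf a _ => a = x
  | _, .node _ _ _ ch => ∃ i, hasLeaf x (ch i)

end DTree

/-- The finite partial sums of `f` over the set `S`. -/
def partialSums {T : Type} [AddCommMonoid K] (S : Set T) (f : T → K) : Set K :=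
  { x | ∃ F : Finset T, ↑F ⊆ S ∧ x = ∑ t ∈ F, f t }

/-- The (possibly infinite) sum of `f` over `S`, i.e. the least upper bound of the finite
partial sums (junk value `0` if no least upper bound exists). -/
noncomputable def setSum {T : Type} [AddCommMonoid K] [PartialOrder K]
    (S : Set T) (f : T → K) : K :=
  if h : ∃ s, IsLUB (partialSums S f) s then h.choose else 0

/-- The greatest lower bound of a set of semiring elements (junk value `0` if none exists). -/
noncomputable def setInf [Zero K] [PartialOrder K] (S : Set K) : K :=
  if h : ∃ z, IsGLB S z then h.choose else 0

/-- A commutative ω-continuous semiring: the natural order `a ≤ b ↔ ∃ c, a + c = b` is a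
partial order, every ω-chain has a least upper bound, and `+` and `×` preserve these
least upper bounds. -/
class OmegaCommSemiring (K : Type) extends CommSemiring K, PartialOrder K where
  le_iff_exists_add : ∀ a b : K, a ≤ b ↔ ∃ c, a + c = b
  chain_lub : ∀ f : ℕ → K, Monotone f → ∃ s, IsLUB (Set.range f) s
  add_lub : ∀ (f : ℕ → K) (a s : K), Monotone f → IsLUB (Set.range f) s →
    IsLUB (Set.range fun n => a + f n) (a + s)
  mul_lub : ∀ (f : ℕ → K) (a s : K), Monotone f → IsLUB (Set.range f) s →
    IsLUB (Set.range fun n => a * f n) (a * s)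

/-- A positive semiring: a product is zero iff one factor is, a sum is zero iff both
summands are. -/
def PositiveSemiring (K : Type) [CommSemiring K] : Prop :=
  (∀ a b : K, a * b = 0 ↔ a = 0 ∨ b = 0) ∧ (∀ a b : K, a + b = 0 ↔ a = 0 ∧ b = 0)

/-- An annotated database: a set of facts together with an annotation function assigning a
semiring element to every fact (`0` outside the database). -/
structure AnnDB (P C K : Type) [Zero K] : Type where
  facts : Set (Fact P C)
  ann : Fact P C → K
  ann_eq_zero : ∀ a ∉ facts, ann a = 0

/-- Union of two annotated databases: annotations are added pointwise. -/
noncomputable def AnnDB.union [AddCommMonoid K] (d₁ d₂ : AnnDB P C K) : AnnDB P C K where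
  facts := d₁.facts ∪ d₂.facts
  ann a := d₁.ann a + d₂.ann a
  ann_eq_zero a ha := by
    show d₁.ann a + d₂.ann a = 0
    rw [d₁.ann_eq_zero a fun h => ha (Set.mem_union_left _ h),
      d₂.ann_eq_zero a fun h => ha (Set.mem_union_right _ h), add_zero]

/-- The facts derivable from `I` by one application of a rule of `prog`. -/
def derivable (prog : Set (Rule P C)) (I : Set (Fact P C)) : Set (Fact P C) :=
  { a | ∃ r ∈ prog, ∃ σ : Fin r.nvars → C,
      (∀ i, (r.body i).subst σ ∈ I) ∧ r.head.subst σ = a }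

/-- The relational provenance of the immediate consequences: the sum over all rules and
homomorphisms deriving `a` of the product of the annotations of the body facts. -/
noncomputable def ruleSum [CommSemiring K] (prog : Set (Rule P C)) (I : Set (Fact P C))
    (lam : Fact P C → K) (a : Fact P C) : K :=
  ∑ᶠ (p : (r : Rule P C) × (Fin r.nvars → C))
      (_ : p.1 ∈ prog ∧ (∀ i, (p.1.body i).subst p.2 ∈ I) ∧ p.1.head.subst p.2 = a),
    ∏ i : Fin p.1.nbody, lam ((p.1.body i).subst p.2)

/-- The annotation-aware immediate consequence operator `T_Σ`. -/
noncomputable def Tcons [CommSemiring K] (prog : Set (Rule P C)) (db : AnnDB P C K) :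
    AnnDB P C K where
  facts := derivable prog db.facts
  ann a := if a ∈ derivable prog db.facts then ruleSum prog db.facts db.ann a else 0
  ann_eq_zero a ha := if_neg ha

/-- The operator `Δ_Σ`: `T_Σ` restricted to the newly derived facts. -/
noncomputable def Dcons [CommSemiring K] (prog : Set (Rule P C)) (db : AnnDB P C K) :
    AnnDB P C K where
  facts := (Tcons prog db).facts \ db.facts
  ann a := if a ∈ (Tcons prog db).facts \ db.facts then (Tcons prog db).ann a else 0
  ann_eq_zero a ha := if_neg ha

/-- The naive evaluation sequence `I_n^0 := (D,K,λ)`, `I_n^{i+1} := T_Σ(I_n^i) ∪ (D,K,λ)`. -/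
noncomputable def naiveSeq [CommSemiring K] (prog : Set (Rule P C)) (db : AnnDB P C K) :
    ℕ → AnnDB P C K
  | 0 => db
  | i + 1 => (Tcons prog (naiveSeq prog db i)).union db

/-- The naive execution provenance semantics: the least upper bound of the annotations of `a`
along the naive evaluation sequence (and `0` if `a` is never derived). -/
noncomputable def NE [CommSemiring K] [PartialOrder K] (prog : Set (Rule P C))
    (db : AnnDB P C K) (a : Fact P C) : K :=
  if ∃ i, a ∈ (naiveSeq prog db i).facts then
    (if h : ∃ s, IsLUB (Set.range fun i => (naiveSeq prog db i).ann a) s then h.choose else 0)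
  else 0

/-- The optimized naive evaluation sequence, which stops as soon as the target fact is
derived. -/
noncomputable def optSeq [CommSemiring K] (prog : Set (Rule P C)) (db : AnnDB P C K)
    (target : Fact P C) : ℕ → AnnDB P C K
  | 0 => db
  | i + 1 =>
      if target ∈ (optSeq prog db target i).facts then optSeq prog db target i
      else (Tcons prog (optSeq prog db target i)).union db

/-- The optimized execution provenance semantics: the annotation of the target fact at the
stabilization point of the optimized naive evaluation sequence. -/
noncomputable def OE [CommSemiring K] (prog : Set (Rule P C)) (db : AnnDB P C K)
    (target : Fact P C) : K :=
  if h : ∃ k, ∀ ℓ, k ≤ ℓ → optSeq prog db target ℓ = optSeq prog db target k then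
    (optSeq prog db target h.choose).ann target
  else 0

/-- The seminaive evaluation sequence `I_sn^0 := (D,K,λ)`, `I_sn^{i+1} := I_sn^i ∪ Δ_Σ(I_sn^i)`. -/
noncomputable def semiSeq [CommSemiring K] (prog : Set (Rule P C)) (db : AnnDB P C K) :
    ℕ → AnnDB P C K
  | 0 => db
  | i + 1 => (semiSeq prog db i).union (Dcons prog (semiSeq prog db i))

/-- The seminaive execution provenance semantics: the annotation of the fact at the
stabilization point of the seminaive evaluation sequence. -/
noncomputable def SNE [CommSemiring K] (prog : Set (Rule P C)) (db : AnnDB P C K)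
    (a : Fact P C) : K :=
  if h : ∃ k, ∀ ℓ, k ≤ ℓ → semiSeq prog db ℓ = semiSeq prog db k then
    (semiSeq prog db h.choose).ann a
  else 0

/-- The all-tree provenance semantics `AT`: the (possibly infinite) sum, over all derivation
trees of `a`, of the product of the annotations of the leaves. -/
noncomputable def AT [CommSemiring K] [PartialOrder K] (prog : Set (Rule P C))
    (db : AnnDB P C K) (a : Fact P C) : K :=
  setSum (Set.univ : Set (DTree prog db.facts a)) fun t => t.weight db.ann

/-- The non-recursive tree provenance semantics `NRT`. -/
noncomputable def NRT [CommSemiring K] (prog : Set (Rule P C)) (db : AnnDB P C K)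
    (a : Fact P C) : K :=
  ∑ᶠ (t : DTree prog db.facts a) (_ : t.nonRecursive), t.weight db.ann

/-- The minimal depth tree provenance semantics `MDT`. -/
noncomputable def MDT [CommSemiring K] (prog : Set (Rule P C)) (db : AnnDB P C K)
    (a : Fact P C) : K :=
  ∑ᶠ (t : DTree prog db.facts a) (_ : t.minimalDepth), t.weight db.ann

/-- The hereditary minimal depth tree provenance semantics `HMDT`. -/
noncomputable def HMDT [CommSemiring K] (prog : Set (Rule P C)) (db : AnnDB P C K)
    (a : Fact P C) : K :=
  ∑ᶠ (t : DTree prog db.facts a) (_ : t.hereditaryMinimal), t.weight db.ann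

/-- `σ'` agrees with `σ` on the head variables of `r` (i.e. `h'(x⃗) = h(x⃗)`). -/
def headAgree (r : Rule P C) (σ σ' : Fin r.nvars → C) : Prop :=
  ∀ v : Fin r.nvars, Term.var v ∈ r.head.args → σ' v = σ v

/-- A `K`-annotated interpretation `(I,μ)` is a model of `Σ` and `(D,K,λ)`. -/
def IsAnnModel [CommSemiring K] [PartialOrder K] (prog : Set (Rule P C)) (db : AnnDB P C K)
    (I : Set (Fact P C)) (μ : Fact P C → K) : Prop :=
  db.facts ⊆ I ∧ (∀ a ∈ db.facts, db.ann a ≤ μ a) ∧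
  ∀ r ∈ prog, ∀ σ : Fin r.nvars → C, (∀ i, (r.body i).subst σ ∈ I) →
    r.head.subst σ ∈ I ∧
    setSum {σ' : Fin r.nvars → C | (∀ i, (r.body i).subst σ' ∈ I) ∧ headAgree r σ σ'}
        (fun σ' => ∏ i : Fin r.nbody, μ ((r.body i).subst σ'))
      ≤ μ (r.head.subst σ)

/-- The annotated model-based provenance semantics `AM`: the greatest lower bound, over all
annotated models, of the annotation of `a` (and `0` if `a` is not entailed). -/
noncomputable def AM [CommSemiring K] [PartialOrder K] (prog : Set (Rule P C))
    (db : AnnDB P C K) (a : Fact P C) : K :=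
  if Entails prog db.facts a then
    setInf { x | ∃ I μ, IsAnnModel prog db I μ ∧ μ a = x }
  else 0

/-- A `K`-set-annotated interpretation `(I,μ)` is a model of `Σ` and `(D,K,λ)`. -/
def IsSetAnnModel [CommSemiring K] (prog : Set (Rule P C)) (db : AnnDB P C K)
    (I : Set (Fact P C)) (μ : Fact P C → Set K) : Prop :=
  db.facts ⊆ I ∧ (∀ a ∈ db.facts, db.ann a ∈ μ a) ∧
  ∀ r ∈ prog, ∀ σ : Fin r.nvars → C, (∀ i, (r.body i).subst σ ∈ I) →
    r.head.subst σ ∈ I ∧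
    ∀ g : Fin r.nbody → K, (∀ i, g i ∈ μ ((r.body i).subst σ)) →
      (∏ i, g i) ∈ μ (r.head.subst σ)

/-- The set-annotated model-based provenance semantics `SAM`: the sum of the elements of the
intersection, over all set-annotated models, of the annotation set of `a`. -/
noncomputable def SAM [CommSemiring K] [PartialOrder K] (prog : Set (Rule P C))
    (db : AnnDB P C K) (a : Fact P C) : K :=
  setSum { k : K | ∀ I μ, IsSetAnnModel prog db I μ → k ∈ μ a } id

/-- The schema of a program: the predicates occurring in its rules. -/
def progSchema (prog : Set (Rule P C)) : Set P :=
  { p | ∃ r ∈ prog, r.head.pred = p ∨ ∃ i, (r.body i).pred = p }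

/-- The schema of a database: the predicates occurring in its facts. -/
def dbSchema (D : Set (Fact P C)) : Set P := { p | ∃ a ∈ D, a.pred = p }

/-- The domain of a database: the constants occurring in its facts. -/
def dbConsts (D : Set (Fact P C)) : Set C := { c | ∃ a ∈ D, c ∈ a.args }

/-- A ground rule built from a list of facts (the body) and a fact (the head). -/
def factRule (body : List (Fact P C)) (head : Fact P C) : Rule P C where
  nvars := 0
  nbody := body.length
  body := fun i => (body.get i).toRuleAtom 0
  head := head.toRuleAtom 0
  vars_in_body := fun v => v.elim0

/-- A ground instance of a rule. -/
def Rule.ground (r : Rule P C) (σ : Fin r.nvars → C) : Rule P C where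
  nvars := 0
  nbody := r.nbody
  body := fun i => ((r.body i).subst σ).toRuleAtom 0
  head := (r.head.subst σ).toRuleAtom 0
  vars_in_body := fun v => v.elim0

/-- The grounding `Σ_D` of a program w.r.t. the domain of a database. -/
def grounding (prog : Set (Rule P C)) (D : Set (Fact P C)) : Set (Rule P C) :=
  { r' | ∃ r ∈ prog, ∃ σ : Fin r.nvars → C, (∀ v, σ v ∈ dbConsts D) ∧ r' = r.ground σ }

/-- Renaming of predicates in a rule. -/
def Rule.mapPred {Q : Type} (f : P → Q) (r : Rule P C) : Rule Q C where
  nvars := r.nvars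
  nbody := r.nbody
  body := fun i => (r.body i).mapPred f
  head := r.head.mapPred f
  vars_in_body := fun v => r.vars_in_body v

/-- An adornment of a rule: exactly one body atom is adorned (sent to the `Sum.inr` copy of
the predicates), the head is adorned or not, all the other atoms keep their predicates
(`Sum.inl` copy). -/
def adornRule (r : Rule P C) (i : Fin r.nbody) (adornHead : Bool) : Rule (P ⊕ P) C where
  nvars := r.nvars
  nbody := r.nbody
  body := fun j => if j = i then (r.body j).mapPred Sum.inr else (r.body j).mapPred Sum.inl
  head := if adornHead then r.head.mapPred Sum.inr else r.head.mapPred Sum.inl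
  vars_in_body := by
    intro v
    obtain ⟨j, hj⟩ := r.vars_in_body v
    refine ⟨j, ?_⟩
    try dsimp only
    split <;> exact hj

/-- The set of adornments of a rule. -/
def adornedRules (r : Rule P C) : Set (Rule (P ⊕ P) C) :=
  { r' | ∃ (i : Fin r.nbody) (b : Bool), r' = adornRule r i b }

/-! ### Auxiliary development for statement 8 -/

section Statement8Aux

variable {P C K : Type} [CommSemiring K]
variable {prog : Set (Rule P C)} {D : Set (Fact P C)}

/-- Bounding set of constants: constants of the database plus constants in rule heads. -/
def sneC0 (prog : Set (Rule P C)) (D : Set (Fact P C)) : Set C :=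
  dbConsts D ∪ {c | ∃ r ∈ prog, Term.const c ∈ r.head.args}

lemma sne_tree_args_subset : ∀ {a : Fact P C}, DTree prog D a →
    ∀ c ∈ a.args, c ∈ sneC0 prog D := by
  intro a t
  induction t with
  | leaf a ha => intro c hc; exact Or.inl ⟨a, ha, hc⟩
  | node r hr σ ch ih =>
    intro c hc
    simp only [Atom.subst, List.mem_map] at hc
    obtain ⟨u, hu, rfl⟩ := hc
    cases u with
    | const c => exact Or.inr ⟨r, hr, hu⟩
    | var v =>
      obtain ⟨j, hj⟩ := r.vars_in_body v
      refine ih j (σ v) ?_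
      show σ v ∈ ((r.body j).subst σ).args
      simp only [Atom.subst, List.mem_map]
      exact ⟨Term.var v, hj, rfl⟩

lemma sne_dbConsts_finite {I : Set (Fact P C)} (hI : I.Finite) : (dbConsts I).Finite := by
  have : dbConsts I = ⋃ a ∈ I, {c | c ∈ a.args} := by
    ext c; simp [dbConsts]
  rw [this]
  exact hI.biUnion fun a _ => a.args.finite_toSet

lemma sneC0_finite (hprog : prog.Finite) (hD : D.Finite) : (sneC0 prog D).Finite := by
  refine (sne_dbConsts_finite hD).union ?_
  have : {c | ∃ r ∈ prog, Term.const c ∈ r.head.args} =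
      ⋃ r ∈ prog, (fun c : C => (Term.const c : Term C (Fin r.nvars))) ⁻¹' {t | t ∈ r.head.args} := by
    ext c; simp
  rw [this]
  refine hprog.biUnion fun r _ => Set.Finite.preimage ?_ r.head.args.finite_toSet
  intro x _ y _ h
  injection h

lemma sne_lists_finite {α : Type} {s : Set α} (hs : s.Finite) :
    ∀ n : ℕ, {l : List α | l.length = n ∧ ∀ c ∈ l, c ∈ s}.Finite := by
  intro n
  induction n with
  | zero =>
    refine Set.Finite.subset (Set.finite_singleton ([] : List α)) ?_
    rintro l ⟨hl, -⟩
    simp [List.length_eq_zero_iff.mp hl]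
  | succ n ih =>
    refine Set.Finite.subset ((hs.prod ih).image fun p => p.1 :: p.2) ?_
    rintro l ⟨hl, hall⟩
    cases l with
    | nil => simp at hl
    | cons x xs =>
      simp only [List.length_cons, Nat.succ.injEq] at hl
      exact ⟨(x, xs), ⟨hall x (by simp), hl, fun c hc => hall c (by simp [hc])⟩, rfl⟩

lemma sne_funs_finite {s : Set C} (hs : s.Finite) (n : ℕ) :
    {σ : Fin n → C | ∀ v, σ v ∈ s}.Finite := by
  have h := Set.Finite.pi (fun _ : Fin n => hs)
  refine h.subset ?_
  intro σ hσ
  simp only [Set.mem_pi, Set.mem_univ, forall_true_left]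
  exact fun v => hσ v

/-- Bounding set of facts. -/
def sneGood (prog : Set (Rule P C)) (D : Set (Fact P C)) : Set (Fact P C) :=
  D ∪ {a | (∃ r ∈ prog, a.pred = r.head.pred ∧ a.args.length = r.head.args.length) ∧
    ∀ c ∈ a.args, c ∈ sneC0 prog D}

lemma sneGood_finite (hprog : prog.Finite) (hD : D.Finite) : (sneGood prog D).Finite := by
  refine hD.union ?_
  refine Set.Finite.subset
    (hprog.biUnion fun r _ => ((sne_lists_finite (sneC0_finite hprog hD) r.head.args.length).image
      fun l => (⟨r.head.pred, l⟩ : Fact P C))) ?_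
  rintro a ⟨⟨r, hr, hp, hlen⟩, hargs⟩
  refine Set.mem_biUnion hr ⟨a.args, ⟨hlen, hargs⟩, ?_⟩
  cases a
  simp_all

lemma sne_tree_mem_good {a : Fact P C} (t : DTree prog D a) : a ∈ sneGood prog D := by
  cases t with
  | leaf a ha => exact Or.inl ha
  | node r hr σ ch =>
    exact Or.inr ⟨⟨r, hr, rfl, by simp [Atom.subst]⟩,
      sne_tree_args_subset (.node r hr σ ch)⟩

lemma sne_homs_finite (hprog : prog.Finite) {I : Set (Fact P C)} (hI : I.Finite) (a : Fact P C) :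
    {p : (r : Rule P C) × (Fin r.nvars → C) |
      p.1 ∈ prog ∧ (∀ j, (p.1.body j).subst p.2 ∈ I) ∧ p.1.head.subst p.2 = a}.Finite := by
  have hc : (dbConsts I).Finite := sne_dbConsts_finite hI
  refine Set.Finite.subset
    (hprog.biUnion fun r _ => (sne_funs_finite hc r.nvars).image (Sigma.mk r)) ?_
  rintro ⟨r, σ⟩ ⟨hr, hbody, -⟩
  refine Set.mem_biUnion hr ⟨σ, ?_, rfl⟩
  intro v
  obtain ⟨j, hj⟩ := r.vars_in_body v
  refine ⟨(r.body j).subst σ, hbody j, ?_⟩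
  show σ v ∈ ((r.body j).subst σ).args
  simp only [Atom.subst, List.mem_map]
  exact ⟨Term.var v, hj, rfl⟩

end Statement8Aux

section Statement8Skel

variable {P C K : Type} [CommSemiring K]
variable {prog : Set (Rule P C)} {D : Set (Fact P C)}

/-- Skeletons of derivation trees, used to prove finiteness. -/
inductive Skel (P C : Type) : Type
  | leaf : Fact P C → Skel P C
  | node : (r : Rule P C) → (Fin r.nvars → C) → List (Skel P C) → Skel P C

def sneToSkel : ∀ {a : Fact P C}, DTree prog D a → Skel P C
  | _, .leaf a _ => .leaf a
  | _, .node r _ σ ch => .node r σ (List.ofFn fun j => sneToSkel (ch j))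

lemma sneToSkel_inj' : ∀ {a : Fact P C} (t : DTree prog D a) {b : Fact P C}
    (t' : DTree prog D b), a = b → sneToSkel t = sneToSkel t' → HEq t t' := by
  intro a t
  induction t with
  | leaf a ha =>
    intro b t' hab h
    subst hab
    cases t' with
    | leaf _ ha' => exact heq_of_eq rfl
    | node r hr σ ch => simp [sneToSkel] at h
  | node r hr σ ch ih =>
    intro b t' hab h
    cases t' with
    | leaf _ ha' => simp [sneToSkel] at h
    | node r' hr' σ' ch' =>
      simp only [sneToSkel, Skel.node.injEq] at h
      obtain ⟨rfl, hσ, hl⟩ := h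
      obtain rfl : σ = σ' := eq_of_heq hσ
      have : (fun j => sneToSkel (ch j)) = fun j => sneToSkel (ch' j) :=
        List.ofFn_inj.mp hl
      have hch : ch = ch' :=
        funext fun j => eq_of_heq (ih j (ch' j) rfl (congrFun this j))
      cases hch
      exact heq_of_eq rfl

lemma sneToSkel_inj {a : Fact P C} (t t' : DTree prog D a)
    (h : sneToSkel t = sneToSkel t') : t = t' :=
  eq_of_heq (sneToSkel_inj' t t' rfl h)

def sneSkelS (prog : Set (Rule P C)) (D : Set (Fact P C)) : ℕ → Set (Skel P C)
  | 0 => Skel.leaf '' D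
  | d+1 => Skel.leaf '' D ∪
      {s | ∃ r ∈ prog, ∃ σ : Fin r.nvars → C, (∀ v, σ v ∈ sneC0 prog D) ∧
        ∃ l : List (Skel P C), l.length = r.nbody ∧ (∀ x ∈ l, x ∈ sneSkelS prog D d) ∧
          s = Skel.node r σ l}

lemma sneSkelS_finite (hprog : prog.Finite) (hD : D.Finite) :
    ∀ d, (sneSkelS prog D d).Finite
  | 0 => hD.image _
  | (d+1) => by
    refine (hD.image _).union ?_
    refine Set.Finite.subset
      (hprog.biUnion fun r _ =>
        (sne_funs_finite (sneC0_finite hprog hD) r.nvars).biUnion fun σ _ =>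
          ((sne_lists_finite (sneSkelS_finite hprog hD d) r.nbody).image
            (Skel.node r σ))) ?_
    rintro s ⟨r, hr, σ, hσ, l, hlen, hl, rfl⟩
    exact Set.mem_biUnion hr (Set.mem_biUnion hσ ⟨l, ⟨hlen, hl⟩, rfl⟩)

lemma sneToSkel_mem : ∀ {a : Fact P C} (t : DTree prog D a) (d : ℕ), t.depth ≤ d →
    sneToSkel t ∈ sneSkelS prog D d := by
  intro a t
  induction t with
  | leaf a ha =>
    intro d hd
    cases d with
    | zero => exact ⟨a, ha, rfl⟩
    | succ d => exact Or.inl ⟨a, ha, rfl⟩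
  | node r hr σ ch ih =>
    intro d hd
    cases d with
    | zero => exact absurd hd (by simp [DTree.depth])
    | succ d =>
      refine Or.inr ⟨r, hr, σ, ?_, List.ofFn fun j => sneToSkel (ch j), by simp, ?_, rfl⟩
      · intro v
        obtain ⟨j, hj⟩ := r.vars_in_body v
        refine sne_tree_args_subset (ch j) (σ v) ?_
        show σ v ∈ ((r.body j).subst σ).args
        simp only [Atom.subst, List.mem_map]
        exact ⟨Term.var v, hj, rfl⟩
      · intro x hx
        obtain ⟨j, rfl⟩ := List.mem_ofFn.mp hx
        refine ih j d ?_
        have h1 : DTree.depth (ch j) ≤ Finset.univ.sup fun j => (ch j).depth :=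
          Finset.le_sup (f := fun j => (ch j).depth) (Finset.mem_univ j)
        have h2 : (Finset.univ.sup fun j => (ch j).depth) + 1 ≤ d + 1 := hd
        omega

lemma sne_trees_finite (hprog : prog.Finite) (hD : D.Finite) (a : Fact P C) (d : ℕ) :
    {t : DTree prog D a | t.depth ≤ d}.Finite := by
  refine Set.Finite.of_finite_image (f := sneToSkel) ?_ ?_
  · refine (sneSkelS_finite hprog hD d).subset ?_
    rintro _ ⟨t, ht, rfl⟩
    exact sneToSkel_mem t d ht
  · exact fun t _ t' _ h => sneToSkel_inj t t' h

lemma sne_hm_minimal {a : Fact P C} (t : DTree prog D a) (ht : t.hereditaryMinimal) :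
    t.minimalDepth := by
  cases t with
  | leaf _ h => intro t'; exact Nat.zero_le _
  | node r hr σ ch => exact ht.1

lemma sne_hmset_finite (hprog : prog.Finite) (hD : D.Finite) (a : Fact P C) :
    {t : DTree prog D a | t.hereditaryMinimal}.Finite := by
  by_cases h : Nonempty (DTree prog D a)
  · obtain ⟨t₀⟩ := h
    exact (sne_trees_finite hprog hD a t₀.depth).subset fun t ht => sne_hm_minimal t ht t₀
  · have : {t : DTree prog D a | t.hereditaryMinimal} = ∅ :=
      Set.eq_empty_of_forall_notMem fun t _ => h ⟨t⟩
    rw [this]; exact Set.finite_empty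

end Statement8Skel

section Statement8Sums

variable {P C K : Type} [CommSemiring K]
variable {prog : Set (Rule P C)} {D : Set (Fact P C)}

lemma sne_finsum_cond_eq_sum {α : Type} (f : α → K) (Q : α → Prop) (hQ : {x | Q x}.Finite) :
    (∑ᶠ (x : α) (_ : Q x), f x) = ∑ x ∈ hQ.toFinset, f x := by
  rw [← finsum_mem_coe_finset, hQ.coe_toFinset]
  rfl

lemma sne_HMDT_eq_sum (db : AnnDB P C K) (a : Fact P C)
    (h : {t : DTree prog db.facts a | t.hereditaryMinimal}.Finite) :
    HMDT prog db a = ∑ t ∈ h.toFinset, t.weight db.ann :=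
  sne_finsum_cond_eq_sum _ _ h

lemma sne_ruleSum_eq_sum (I : Set (Fact P C)) (lam : Fact P C → K) (a : Fact P C)
    (h : {p : (r : Rule P C) × (Fin r.nvars → C) |
      p.1 ∈ prog ∧ (∀ j, (p.1.body j).subst p.2 ∈ I) ∧ p.1.head.subst p.2 = a}.Finite) :
    ruleSum prog I lam a = ∑ p ∈ h.toFinset, ∏ j, lam ((p.1.body j).subst p.2) :=
  sne_finsum_cond_eq_sum _ _ h

/-- Build a derivation tree of `a` from a rule application deriving `a`. -/
noncomputable def sneMkTree {a : Fact P C} (p : (r : Rule P C) × (Fin r.nvars → C))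
    (hp : p.1 ∈ prog) (h : p.1.head.subst p.2 = a)
    (f : ∀ j, DTree prog D ((p.1.body j).subst p.2)) : DTree prog D a :=
  h ▸ DTree.node p.1 hp p.2 f

lemma sneMkTree_weight (lam : Fact P C → K) {a : Fact P C} (p) (hp : p.1 ∈ prog)
    (h : p.1.head.subst p.2 = a) (f : ∀ j, DTree prog D ((p.1.body j).subst p.2)) :
    (sneMkTree p hp h f).weight lam = ∏ j, (f j).weight lam := by
  subst h; rfl

lemma sneMkTree_depth {a : Fact P C} (p) (hp : p.1 ∈ prog)
    (h : p.1.head.subst p.2 = a) (f : ∀ j, DTree prog D ((p.1.body j).subst p.2)) :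
    (sneMkTree p hp h f).depth = (Finset.univ.sup fun j => (f j).depth) + 1 := by
  subst h; rfl

lemma sneMkTree_hm {a : Fact P C} (p) (hp : p.1 ∈ prog)
    (h : p.1.head.subst p.2 = a) (f : ∀ j, DTree prog D ((p.1.body j).subst p.2)) :
    (sneMkTree p hp h f).hereditaryMinimal ↔
      ((sneMkTree p hp h f).minimalDepth ∧ ∀ j, (f j).hereditaryMinimal) := by
  subst h; exact Iff.rfl

/-- Destruct a derivation tree into the root rule application and the subtrees. -/
def sneDest : ∀ {a : Fact P C}, DTree prog D a →
    Option ((p : (r : Rule P C) × (Fin r.nvars → C)) ×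
      ∀ j, DTree prog D ((p.1.body j).subst p.2))
  | _, .leaf _ _ => none
  | _, .node r _ σ ch => some ⟨⟨r, σ⟩, ch⟩

lemma sneDest_isSome {a : Fact P C} (ha : a ∉ D) (t : DTree prog D a) :
    (sneDest t).isSome := by
  cases t with
  | leaf _ h => exact absurd h ha
  | node r hr σ ch => rfl

lemma sneDest_spec {a : Fact P C} (t : DTree prog D a) {x}
    (hx : sneDest t = some x) :
    ∃ (hp : x.1.1 ∈ prog) (h : x.1.1.head.subst x.1.2 = a), t = sneMkTree x.1 hp h x.2 := by
  cases t with
  | leaf _ h => simp [sneDest] at hx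
  | node r hr σ ch =>
    obtain rfl : x = ⟨⟨r, σ⟩, ch⟩ := by
      injection hx with h
      exact h.symm
    exact ⟨hr, rfl, rfl⟩

lemma sneMkTree_dest {a : Fact P C} (p) (hp : p.1 ∈ prog)
    (h : p.1.head.subst p.2 = a) (f : ∀ j, DTree prog D ((p.1.body j).subst p.2)) :
    sneDest (sneMkTree p hp h f) = some ⟨p, f⟩ := by
  subst h; rfl

end Statement8Sums

section Statement8Semi

variable {P C K : Type} [CommSemiring K]
variable {prog : Set (Rule P C)} {db : AnnDB P C K}

lemma sne_annDB_ext {d₁ d₂ : AnnDB P C K} (h1 : d₁.facts = d₂.facts)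
    (h2 : ∀ a, d₁.ann a = d₂.ann a) : d₁ = d₂ := by
  cases d₁; cases d₂
  simp only [AnnDB.mk.injEq]
  exact ⟨h1, funext h2⟩

lemma sne_semiSeq_facts_succ (i : ℕ) :
    (semiSeq prog db (i+1)).facts =
      (semiSeq prog db i).facts ∪ derivable prog (semiSeq prog db i).facts := by
  show (semiSeq prog db i).facts ∪
      (derivable prog (semiSeq prog db i).facts \ (semiSeq prog db i).facts) = _
  ext a
  by_cases h : a ∈ (semiSeq prog db i).facts <;> simp [h]

lemma sne_semiSeq_ann_succ (i : ℕ) (a : Fact P C) :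
    (semiSeq prog db (i+1)).ann a = (semiSeq prog db i).ann a +
      (if a ∈ derivable prog (semiSeq prog db i).facts \ (semiSeq prog db i).facts
       then ruleSum prog (semiSeq prog db i).facts (semiSeq prog db i).ann a else 0) := by
  show (semiSeq prog db i).ann a + (Dcons prog (semiSeq prog db i)).ann a = _
  congr 1
  by_cases h : a ∈ derivable prog (semiSeq prog db i).facts \ (semiSeq prog db i).facts
  · rw [if_pos h]
    show (if a ∈ derivable prog (semiSeq prog db i).facts \ (semiSeq prog db i).facts
        then (Tcons prog (semiSeq prog db i)).ann a else 0) = _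
    rw [if_pos h]
    show (if a ∈ derivable prog (semiSeq prog db i).facts
        then ruleSum prog (semiSeq prog db i).facts (semiSeq prog db i).ann a else 0) = _
    exact if_pos h.1
  · rw [if_neg h]
    show (if a ∈ derivable prog (semiSeq prog db i).facts \ (semiSeq prog db i).facts
        then (Tcons prog (semiSeq prog db i)).ann a else 0) = 0
    exact if_neg h

lemma sne_semiSeq_facts_eq (i : ℕ) :
    (semiSeq prog db i).facts = {a | ∃ t : DTree prog db.facts a, t.depth ≤ i} := by
  induction i with
  | zero =>
    ext a
    constructor
    · intro ha
      exact ⟨.leaf a ha, le_refl 0⟩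
    · rintro ⟨t, ht⟩
      cases t with
      | leaf _ ha => exact ha
      | node r hr σ ch => simp [DTree.depth] at ht
  | succ i ih =>
    rw [sne_semiSeq_facts_succ, ih]
    ext a
    constructor
    · rintro (⟨t, ht⟩ | ⟨r, hr, σ, hb, rfl⟩)
      · exact ⟨t, ht.trans (Nat.le_succ i)⟩
      · choose ts hts using fun j => hb j
        refine ⟨.node r hr σ ts, ?_⟩
        show (Finset.univ.sup fun j => (ts j).depth) + 1 ≤ i + 1
        have : (Finset.univ.sup fun j => (ts j).depth) ≤ i :=
          Finset.sup_le fun j _ => hts j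
        omega
    · rintro ⟨t, ht⟩
      cases t with
      | leaf _ ha => exact Or.inl ⟨.leaf _ ha, Nat.zero_le _⟩
      | node r hr σ ch =>
        refine Or.inr ⟨r, hr, σ, fun j => ⟨ch j, ?_⟩, rfl⟩
        have h1 : DTree.depth (ch j) ≤ Finset.univ.sup fun j => (ch j).depth :=
          Finset.le_sup (f := fun j => (ch j).depth) (Finset.mem_univ j)
        have h2 : (Finset.univ.sup fun j => (ch j).depth) + 1 ≤ i + 1 := ht
        omega

lemma sne_semiSeq_step_eq {i : ℕ}
    (h : derivable prog (semiSeq prog db i).facts ⊆ (semiSeq prog db i).facts) :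
    semiSeq prog db (i+1) = semiSeq prog db i := by
  refine sne_annDB_ext ?_ ?_
  · rw [sne_semiSeq_facts_succ]
    exact Set.union_eq_self_of_subset_right h
  · intro a
    rw [sne_semiSeq_ann_succ]
    rw [if_neg (fun hd => hd.2 (h hd.1)), add_zero]

lemma sne_semiSeq_stab (hprog : prog.Finite) (hfin : db.facts.Finite) :
    ∃ k, ∀ ℓ, k ≤ ℓ → semiSeq prog db ℓ = semiSeq prog db k := by
  have hgood : ∀ i, (semiSeq prog db i).facts ⊆ sneGood prog db.facts := by
    intro i
    rw [sne_semiSeq_facts_eq]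
    rintro a ⟨t, -⟩
    exact sne_tree_mem_good t
  have hGf := sneGood_finite hprog hfin
  have hstep : ∃ i, (semiSeq prog db i).facts = (semiSeq prog db (i+1)).facts := by
    by_contra h
    push_neg at h
    have hmono : ∀ i, (semiSeq prog db i).facts ⊂ (semiSeq prog db (i+1)).facts := by
      intro i
      refine ssubset_of_subset_of_ne ?_ (h i)
      rw [sne_semiSeq_facts_succ]
      exact Set.subset_union_left
    have hsm : StrictMono fun i => ((semiSeq prog db i).facts).ncard :=
      strictMono_nat_of_lt_succ fun i => Set.ncard_lt_ncard (hmono i) (hGf.subset (hgood _))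
    have h1 := hsm.le_apply (x := (sneGood prog db.facts).ncard + 1)
    have h2 : ((semiSeq prog db ((sneGood prog db.facts).ncard + 1)).facts).ncard ≤
        (sneGood prog db.facts).ncard := Set.ncard_le_ncard (hgood _) hGf
    omega
  obtain ⟨i, hi⟩ := hstep
  have hsub : derivable prog (semiSeq prog db i).facts ⊆ (semiSeq prog db i).facts := by
    intro a ha
    rw [hi, sne_semiSeq_facts_succ]
    exact Or.inr ha
  refine ⟨i, ?_⟩
  intro ℓ hℓ
  induction ℓ, hℓ using Nat.le_induction with
  | base => rfl
  | succ ℓ hℓ ih =>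
    show (semiSeq prog db ℓ).union (Dcons prog (semiSeq prog db ℓ)) = _
    rw [ih]
    exact sne_semiSeq_step_eq hsub

end Statement8Semi

section Statement8Main

variable {P C K : Type} [CommSemiring K]
variable {prog : Set (Rule P C)} {db : AnnDB P C K}

lemma sne_leaf_mem {a : Fact P C} (haD : a ∈ db.facts) (i : ℕ) :
    a ∈ (semiSeq prog db i).facts := by
  rw [sne_semiSeq_facts_eq]
  exact ⟨.leaf a haD, Nat.zero_le _⟩

lemma sne_main (hprog : prog.Finite) (hfin : db.facts.Finite) :
    ∀ i, ∀ a ∈ (semiSeq prog db i).facts,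
      (semiSeq prog db i).ann a = HMDT prog db a := by
  have hmf : ∀ b : Fact P C, {t : DTree prog db.facts b | t.hereditaryMinimal}.Finite :=
    sne_hmset_finite hprog hfin
  intro i
  induction i with
  | zero =>
    intro a ha
    change a ∈ db.facts at ha
    have hset : {t : DTree prog db.facts a | t.hereditaryMinimal} = {DTree.leaf a ha} := by
      ext t
      simp only [Set.mem_setOf_eq, Set.mem_singleton_iff]
      constructor
      · intro ht
        cases t with
        | leaf _ h' => rfl
        | node r hr σ ch =>
          exfalso
          have h0 := ht.1 (.leaf _ ha)
          have : (Finset.univ.sup fun j => (ch j).depth) + 1 ≤ 0 := h0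
          omega
      · rintro rfl
        trivial
    have htf : (hmf a).toFinset = {DTree.leaf a ha} := by
      ext t
      rw [Set.Finite.mem_toFinset, hset]
      simp only [Set.mem_singleton_iff, Finset.mem_singleton]
    rw [sne_HMDT_eq_sum db a (hmf a), htf, Finset.sum_singleton]
    rfl
  | succ i ih =>
    intro a ha
    rw [sne_semiSeq_ann_succ]
    by_cases hmem : a ∈ (semiSeq prog db i).facts
    · rw [if_neg (fun hd => hd.2 hmem), add_zero]
      exact ih a hmem
    · have hder : a ∈ derivable prog (semiSeq prog db i).facts := by
        rw [sne_semiSeq_facts_succ] at ha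
        exact ha.resolve_left hmem
      rw [if_pos ⟨hder, hmem⟩, (semiSeq prog db i).ann_eq_zero a hmem, zero_add]
      -- core computation
      have hIfin : (semiSeq prog db i).facts.Finite := by
        refine (sneGood_finite hprog hfin).subset ?_
        rw [sne_semiSeq_facts_eq]
        rintro b ⟨t, -⟩
        exact sne_tree_mem_good t
      have hR := sne_homs_finite hprog hIfin a
      -- depth facts
      have hnot : ∀ t' : DTree prog db.facts a, i + 1 ≤ t'.depth := by
        intro t'
        by_contra hlt
        push_neg at hlt
        exact hmem (by rw [sne_semiSeq_facts_eq]; exact ⟨t', by omega⟩)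
      have hbody_depth : ∀ b ∈ (semiSeq prog db i).facts,
          ∀ t : DTree prog db.facts b, t.hereditaryMinimal → t.depth ≤ i := by
        intro b hb t ht
        rw [sne_semiSeq_facts_eq] at hb
        obtain ⟨tb, htb⟩ := hb
        exact (sne_hm_minimal t ht tb).trans htb
      rw [sne_ruleSum_eq_sum (semiSeq prog db i).facts (semiSeq prog db i).ann a hR,
        sne_HMDT_eq_sum db a (hmf a)]
      have key : ∀ p ∈ hR.toFinset,
          (∏ j, (semiSeq prog db i).ann ((p.1.body j).subst p.2)) =
          ∑ f ∈ Fintype.piFinset (fun j => (hmf ((p.1.body j).subst p.2)).toFinset),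
            ∏ j, (f j).weight db.ann := by
        intro p hp
        rw [← Finset.prod_univ_sum]
        refine Finset.prod_congr rfl fun j _ => ?_
        rw [ih _ ((hR.mem_toFinset.mp hp).2.1 j), sne_HMDT_eq_sum db _ (hmf _)]
      rw [Finset.sum_congr rfl key, Finset.sum_sigma']
      refine Finset.sum_bij'
        (fun x hx => sneMkTree x.1 ((hR.mem_toFinset.mp (Finset.mem_sigma.mp hx).1).1)
          ((hR.mem_toFinset.mp (Finset.mem_sigma.mp hx).1).2.2) x.2)
        (fun t ht => (sneDest t).get (sneDest_isSome
          (fun haD => hmem (sne_leaf_mem haD i)) t))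
        ?_ ?_ ?_ ?_ ?_
      · -- hi : image in hm trees
        intro x hx
        have hx1 := hR.mem_toFinset.mp (Finset.mem_sigma.mp hx).1
        have hx2 := Fintype.mem_piFinset.mp (Finset.mem_sigma.mp hx).2
        rw [Set.Finite.mem_toFinset, Set.mem_setOf_eq, sneMkTree_hm]
        constructor
        · intro t'
          rw [sneMkTree_depth]
          have hsup : (Finset.univ.sup fun j => (x.2 j).depth) ≤ i := by
            refine Finset.sup_le fun j _ => ?_
            exact hbody_depth _ (hx1.2.1 j) (x.2 j) ((hmf _).mem_toFinset.mp (hx2 j))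
          have := hnot t'
          omega
        · exact fun j => (hmf _).mem_toFinset.mp (hx2 j)
      · -- hj : dest lands in sigma finset
        intro t ht
        set hsome := sneDest_isSome
          (fun haD => hmem (sne_leaf_mem haD i)) t with hsdef
        have hde : sneDest t = some ((sneDest t).get hsome) := (Option.some_get hsome).symm
        obtain ⟨hp, hh, hteq⟩ := sneDest_spec t hde
        rw [Set.Finite.mem_toFinset] at ht
        rw [hteq, Set.mem_setOf_eq, sneMkTree_hm] at ht
        obtain ⟨hmin, hch⟩ := ht
        have hdep : (sneMkTree ((sneDest t).get hsome).1 hp hh ((sneDest t).get hsome).2).depth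
            ≤ i + 1 := by
          have hex : ∃ t0 : DTree prog db.facts a, t0.depth ≤ i + 1 := by
            have := ha
            rw [sne_semiSeq_facts_eq] at this
            exact this
          obtain ⟨t0, ht0⟩ := hex
          exact (hmin t0).trans ht0
        rw [sneMkTree_depth] at hdep
        refine Finset.mem_sigma.mpr ⟨hR.mem_toFinset.mpr ⟨hp, ?_, hh⟩, ?_⟩
        · intro j
          rw [sne_semiSeq_facts_eq]
          refine ⟨((sneDest t).get hsome).2 j, ?_⟩
          have h1 : (((sneDest t).get hsome).2 j).depth ≤
              Finset.univ.sup fun j => (((sneDest t).get hsome).2 j).depth :=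
            Finset.le_sup (f := fun j => (((sneDest t).get hsome).2 j).depth)
              (Finset.mem_univ j)
          omega
        · exact Fintype.mem_piFinset.mpr fun j => (hmf _).mem_toFinset.mpr (hch j)
      · -- left inverse
        intro x hx
        apply Option.some_injective
        rw [Option.some_get, sneMkTree_dest]
      · -- right inverse
        intro t ht
        set hsome := sneDest_isSome
          (fun haD => hmem (sne_leaf_mem haD i)) t with hsdef
        have hde : sneDest t = some ((sneDest t).get hsome) := (Option.some_get hsome).symm
        obtain ⟨hp, hh, hteq⟩ := sneDest_spec t hde
        exact hteq.symm
      · -- weights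
        intro x hx
        exact (sneMkTree_weight db.ann x.1 _ _ x.2).symm

end Statement8Main
/-- the seminaive execution semantics equals the
hereditary-minimal-depth-tree semantics. -/
theorem statement_8 (P C K : Type) [CommSemiring K]
    (prog : Set (Rule P C)) (hprog : prog.Finite)
    (db : AnnDB P C K) (hfin : db.facts.Finite)
    (hann : ∀ a ∈ db.facts, db.ann a ≠ 0) (α : Fact P C) :
    SNE prog db α = HMDT prog db α := by
  obtain ⟨k, hk⟩ := sne_semiSeq_stab hprog hfin
  have hex : ∃ k, ∀ ℓ, k ≤ ℓ → semiSeq prog db ℓ = semiSeq prog db k := ⟨k, hk⟩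
  rw [SNE, dif_pos hex]
  have h1 : semiSeq prog db hex.choose = semiSeq prog db k := by
    have h2 := hex.choose_spec (max hex.choose k) (le_max_left _ _)
    rw [← h2, hk (max hex.choose k) (le_max_right _ _)]
  rw [h1]
  by_cases hα : α ∈ (semiSeq prog db k).facts
  · exact sne_main hprog hfin k α hα
  · rw [(semiSeq prog db k).ann_eq_zero α hα]
    have hempty : IsEmpty (DTree prog db.facts α) := by
      constructor
      intro t
      apply hα
      have hmem : α ∈ (semiSeq prog db (max t.depth k)).facts := by
        rw [sne_semiSeq_facts_eq]
        exact ⟨t, le_max_left _ _⟩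
      rwa [hk _ (le_max_right _ _)] at hmem
    rw [HMDT]
    exact (finsum_of_isEmpty _).symm

end Datalog
end

section
/- For every Datalog program Σ, annotated database (D,K,λ) with K a commutative ω-continuous semiring, and fact α, it holds that HMDT(Σ,D,K,λ,α) ⊑ NRT(Σ,D,K,λ,α) ⊑ AT(Σ,D,K,λ,α) and HMDT(Σ,D,K,λ,α) ⊑ MDT(Σ,D,K,λ,α) ⊑ AT(Σ,D,K,λ,α), where ⊑ is the natural order of K. -/
attribute [local instance] Classical.propDecidable

namespace Datalog

variable {P C K : Type}

/-! ### Auxiliary development for Statement 9 -/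

section Statement9Aux

variable {P C : Type}

/-- The constants that can occur in a fact derived by a tree. -/
def uConsts (prog : Set (Rule P C)) (D : Set (Fact P C)) : Set C :=
  dbConsts D ∪ {c | ∃ r ∈ prog, Term.const c ∈ r.head.args}

/-- A finite universe of facts containing every fact derivable by a tree. -/
def uFacts (prog : Set (Rule P C)) (D : Set (Fact P C)) : Set (Fact P C) :=
  D ∪ {a | ∃ r ∈ prog, a.pred = r.head.pred ∧ a.args.length = r.head.args.length ∧
      ∀ c ∈ a.args, c ∈ uConsts prog D}

lemma uConsts_finite {prog : Set (Rule P C)} {D : Set (Fact P C)}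
    (hp : prog.Finite) (hD : D.Finite) : (uConsts prog D).Finite := by
  apply Set.Finite.union
  · have h : dbConsts D = ⋃ a ∈ D, {c | c ∈ a.args} := by
      ext c; simp [dbConsts]
    rw [h]
    exact hD.biUnion fun a _ => a.args.finite_toSet
  · have h : {c | ∃ r ∈ prog, Term.const c ∈ r.head.args} =
        ⋃ r ∈ prog, {c | Term.const c ∈ r.head.args} := by ext; simp
    rw [h]
    refine hp.biUnion fun r _ => ?_
    have h2 : {c | Term.const c ∈ r.head.args} =
        (fun c => (Term.const c : Term C (Fin r.nvars))) ⁻¹' {t | t ∈ r.head.args} := rfl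
    rw [h2]
    refine Set.Finite.preimage ?_ r.head.args.finite_toSet
    intro a _ b _ h3
    injection h3

lemma finite_lists {S : Set C} (hS : S.Finite) (n : ℕ) :
    {l : List C | l.length = n ∧ ∀ c ∈ l, c ∈ S}.Finite := by
  have : Finite ↥S := hS.to_subtype
  apply Set.Finite.subset ((List.finite_length_eq ↥S n).image (List.map Subtype.val))
  rintro l ⟨hlen, hmem⟩
  refine ⟨l.attach.map (fun x => (⟨x.1, hmem _ x.2⟩ : ↥S)), by simp [hlen], ?_⟩
  simp [List.map_map]

lemma uFacts_finite {prog : Set (Rule P C)} {D : Set (Fact P C)}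
    (hp : prog.Finite) (hD : D.Finite) : (uFacts prog D).Finite := by
  apply Set.Finite.union hD
  have hsub : {a : Fact P C | ∃ r ∈ prog, a.pred = r.head.pred ∧
      a.args.length = r.head.args.length ∧ ∀ c ∈ a.args, c ∈ uConsts prog D} ⊆
      ⋃ r ∈ prog, (fun l => (⟨r.head.pred, l⟩ : Fact P C)) ''
        {l | l.length = r.head.args.length ∧ ∀ c ∈ l, c ∈ uConsts prog D} := by
    rintro a ⟨r, hr, h1, h2, h3⟩
    refine Set.mem_biUnion hr ⟨a.args, ⟨h2, h3⟩, ?_⟩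
    cases a with
    | mk p args => simp only at h1 ⊢; rw [h1]
  exact Set.Finite.subset
    (hp.biUnion fun r _ => (finite_lists (uConsts_finite hp hD) _).image _) hsub

lemma args_subset_uConsts {prog : Set (Rule P C)} {D : Set (Fact P C)} {a : Fact P C}
    (ha : a ∈ uFacts prog D) : ∀ c ∈ a.args, c ∈ uConsts prog D := by
  intro c hc
  rcases ha with ha | ⟨r, hr, _, _, h3⟩
  · exact Or.inl ⟨a, ha, hc⟩
  · exact h3 c hc

lemma root_mem_uFacts {prog : Set (Rule P C)} {D : Set (Fact P C)} :
    ∀ {a : Fact P C} (_ : DTree prog D a), a ∈ uFacts prog D := by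
  intro a t
  induction t with
  | leaf a ha => exact Or.inl ha
  | node r hr σ ch ih =>
    refine Or.inr ⟨r, hr, rfl, by simp [Atom.subst], ?_⟩
    intro c hc
    simp only [Atom.subst, List.mem_map] at hc
    obtain ⟨tm, htm, rfl⟩ := hc
    cases tm with
    | const c' =>
      exact Or.inr ⟨r, hr, htm⟩
    | var v =>
      obtain ⟨i, hi⟩ := r.vars_in_body v
      refine args_subset_uConsts (ih i) _ ?_
      simp only [Atom.subst, List.mem_map]
      exact ⟨Term.var v, hi, rfl⟩

lemma sigma_mem_uConsts {prog : Set (Rule P C)} {D : Set (Fact P C)} {r : Rule P C}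
    (σ : Fin r.nvars → C) (ch : ∀ i : Fin r.nbody, DTree prog D ((r.body i).subst σ)) :
    ∀ v, σ v ∈ uConsts prog D := by
  intro v
  obtain ⟨i, hi⟩ := r.vars_in_body v
  refine args_subset_uConsts (root_mem_uFacts (ch i)) _ ?_
  simp only [Atom.subst, List.mem_map]
  exact ⟨Term.var v, hi, rfl⟩

lemma sigmaSet_finite {prog : Set (Rule P C)} {D : Set (Fact P C)}
    (hp : prog.Finite) (hD : D.Finite) (r : Rule P C) :
    {σ : Fin r.nvars → C | ∀ v, σ v ∈ uConsts prog D}.Finite := by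
  have h : {σ : Fin r.nvars → C | ∀ v, σ v ∈ uConsts prog D} =
      Set.pi Set.univ (fun _ => uConsts prog D) := by
    ext σ; simp [Set.mem_pi]
  rw [h]
  exact Set.Finite.pi fun _ => uConsts_finite hp hD

lemma trees_depth_le_finite {prog : Set (Rule P C)} {D : Set (Fact P C)}
    (hp : prog.Finite) (hD : D.Finite) :
    ∀ (n : ℕ) (a : Fact P C), {t : DTree prog D a | t.depth ≤ n}.Finite := by
  intro n
  induction n with
  | zero =>
    intro a
    apply Set.Subsingleton.finite
    intro t ht t' ht'
    cases t with
    | leaf _ h1 =>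
      cases t' with
      | leaf _ h2 => rfl
      | node r hr σ ch => simp [DTree.depth] at ht'
    | node r hr σ ch => simp [DTree.depth] at ht
  | succ n ih =>
    intro a
    set IDX : Set ((r : Rule P C) × (Fin r.nvars → C)) :=
      {p | p.1 ∈ prog ∧ ∀ v, p.2 v ∈ uConsts prog D} with hIDXdef
    have hIDXfin : IDX.Finite := by
      apply Set.Finite.subset
        (hp.biUnion fun r _ => (sigmaSet_finite hp hD r).image (Sigma.mk r))
      rintro ⟨r, σ⟩ ⟨h1, h2⟩
      exact Set.mem_biUnion h1 ⟨σ, h2, rfl⟩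
    set nodeImg : ((r : Rule P C) × (Fin r.nvars → C)) → Set (DTree prog D a) :=
      fun p => {t | ∃ (h : p.1.head.subst p.2 = a) (hr : p.1 ∈ prog)
        (ch : ∀ i : Fin p.1.nbody, DTree prog D ((p.1.body i).subst p.2)),
        (∀ i, (ch i).depth ≤ n) ∧ t = h ▸ DTree.node p.1 hr p.2 ch} with hnodeImg
    have hnodeFin : ∀ p, (nodeImg p).Finite := by
      intro p
      rcases Set.eq_empty_or_nonempty (nodeImg p) with he | ⟨t₀, ht₀⟩
      · rw [he]; exact Set.finite_empty
      · obtain ⟨h, hr, _, _, _⟩ := ht₀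
        apply Set.Finite.subset
          ((Set.Finite.pi fun i => ih ((p.1.body i).subst p.2)).image
            (fun ch => h ▸ DTree.node p.1 hr p.2 ch))
        rintro t ⟨h', hr', ch, hdep, rfl⟩
        exact ⟨ch, by simpa [Set.mem_pi] using hdep, rfl⟩
    have hcover : {t : DTree prog D a | t.depth ≤ n + 1} ⊆
        {t : DTree prog D a | ∃ h : a ∈ D, t = DTree.leaf a h} ∪ ⋃ p ∈ IDX, nodeImg p := by
      intro t ht
      cases t with
      | leaf _ h1 => exact Or.inl ⟨h1, rfl⟩
      | node r hr σ ch =>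
        refine Or.inr (Set.mem_biUnion (show (⟨r, σ⟩ : (r : Rule P C) ×
          (Fin r.nvars → C)) ∈ IDX from ⟨hr, sigma_mem_uConsts σ ch⟩) ?_)
        refine ⟨rfl, hr, ch, ?_, rfl⟩
        intro i
        simp only [Set.mem_setOf_eq, DTree.depth] at ht
        have h2 : (Finset.univ.sup fun i => (ch i).depth) ≤ n := by omega
        exact le_trans (Finset.le_sup (f := fun i => (ch i).depth) (Finset.mem_univ i)) h2
    refine Set.Finite.subset (Set.Finite.union ?_ (hIDXfin.biUnion fun p _ => hnodeFin p)) hcover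
    apply Set.Subsingleton.finite
    rintro t ⟨h1, rfl⟩ t' ⟨h2, rfl⟩
    rfl

lemma hereditaryMinimal_minimalDepth {prog : Set (Rule P C)} {D : Set (Fact P C)}
    {a : Fact P C} {t : DTree prog D a} (ht : t.hereditaryMinimal) : t.minimalDepth := by
  cases t with
  | leaf _ h => intro t'; exact Nat.zero_le _
  | node r hr σ ch => exact ht.1

lemma hereditaryMinimal_avoid {prog : Set (Rule P C)} {D : Set (Fact P C)} :
    ∀ {a : Fact P C} (t : DTree prog D a), t.hereditaryMinimal →
      ∀ s : Set (Fact P C), (∀ b ∈ s, ∀ t' : DTree prog D b, t.depth < t'.depth) →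
      t.avoid s := by
  intro a t
  induction t with
  | leaf a ha =>
    intro _ s hs
    simp only [DTree.avoid]
    intro hmem
    exact lt_irrefl _ (hs a hmem (DTree.leaf a ha))
  | node r hr σ ch ih =>
    intro hhm s hs
    have hlt : ∀ i, (ch i).depth < (DTree.node r hr σ ch).depth := by
      intro i
      simp only [DTree.depth]
      exact Nat.lt_succ_of_le (Finset.le_sup (f := fun i => (ch i).depth) (Finset.mem_univ i))
    refine ⟨fun hmem => lt_irrefl _ (hs _ hmem (DTree.node r hr σ ch)), fun i => ?_⟩
    refine ih i (hhm.2 i) _ ?_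
    intro b hb t'
    rcases hb with rfl | hb
    · exact lt_of_lt_of_le (hlt i) (hhm.1 t')
    · exact lt_trans (hlt i) (hs b hb t')

lemma avoid_depth_bound {prog : Set (Rule P C)} {D : Set (Fact P C)}
    (hfinU : (uFacts prog D).Finite) :
    ∀ {a : Fact P C} (t : DTree prog D a) (s : Finset (Fact P C)),
      ↑s ⊆ uFacts prog D → t.avoid ↑s → t.depth + s.card ≤ hfinU.toFinset.card := by
  intro a t
  induction t with
  | leaf a ha =>
    intro s hsub _
    simp only [DTree.depth, Nat.zero_add]
    apply Finset.card_le_card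
    intro x hx
    exact hfinU.mem_toFinset.mpr (hsub hx)
  | node r hr σ ch ih =>
    intro s hsub hav
    set b : Fact P C := r.head.subst σ with hb
    have hbU : b ∈ uFacts prog D := root_mem_uFacts (DTree.node r hr σ ch)
    have hbs : b ∉ s := by
      intro h; exact hav.1 (by exact_mod_cast h)
    have hins : ↑(insert b s) ⊆ uFacts prog D := by
      rw [Finset.coe_insert]
      exact Set.insert_subset hbU hsub
    have hcard : (insert b s).card = s.card + 1 := Finset.card_insert_of_notMem hbs
    have hIH : ∀ i, (ch i).depth + (s.card + 1) ≤ hfinU.toFinset.card := by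
      intro i
      have h := ih i (insert b s) hins (by simpa [Finset.coe_insert] using hav.2 i)
      rwa [hcard] at h
    have hbase : s.card + 1 ≤ hfinU.toFinset.card := by
      rw [← hcard]
      apply Finset.card_le_card
      intro x hx
      exact hfinU.mem_toFinset.mpr (hins hx)
    simp only [DTree.depth]
    rcases Nat.eq_zero_or_pos r.nbody with hz | hpos
    · have : (Finset.univ : Finset (Fin r.nbody)) = ∅ := by
        apply Finset.univ_eq_empty_iff.mpr
        rw [hz]; exact Fin.isEmpty'
      rw [this, Finset.sup_empty]
      have hb0 : (⊥ : ℕ) = 0 := rfl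
      rw [hb0]
      omega
    · obtain ⟨i, _, hi⟩ := Finset.exists_mem_eq_sup (Finset.univ : Finset (Fin r.nbody))
        (Finset.univ_nonempty_iff.mpr ⟨⟨0, hpos⟩⟩) (fun i => (ch i).depth)
      rw [hi]
      have := hIH i
      omega

section OrderLemmas

variable {K : Type} [OmegaCommSemiring K]

lemma le_self_add' (a c : K) : a ≤ a + c :=
  (OmegaCommSemiring.le_iff_exists_add a (a + c)).mpr ⟨c, rfl⟩

lemma sum_le_sum_of_subset' {T : Type} {A B : Finset T} (h : A ⊆ B) (f : T → K) :
    ∑ x ∈ A, f x ≤ ∑ x ∈ B, f x := by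
  classical
  rw [← Finset.sum_sdiff h, add_comm]
  exact le_self_add' _ _

lemma finsum_cond_eq_sum {T : Type} (f : T → K) (p : T → Prop) (h : {t | p t}.Finite) :
    (∑ᶠ (t) (_ : p t), f t) = ∑ t ∈ h.toFinset, f t := by
  have h2 : (∑ᶠ t ∈ ({t | p t} : Set T), f t) = ∑ t ∈ h.toFinset, f t := by
    rw [← finsum_mem_coe_finset f h.toFinset, Set.Finite.coe_toFinset]
  exact h2

end OrderLemmas

end Statement9Aux

/-- `HMDT ⊑ NRT ⊑ AT` and `HMDT ⊑ MDT ⊑ AT`. -/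
theorem statement_9 (P C K : Type) [OmegaCommSemiring K]
    (prog : Set (Rule P C)) (hprog : prog.Finite)
    (db : AnnDB P C K) (hfin : db.facts.Finite)
    (hann : ∀ a ∈ db.facts, db.ann a ≠ 0) (α : Fact P C) :
    (HMDT prog db α ≤ NRT prog db α ∧ NRT prog db α ≤ AT prog db α)
      ∧ (HMDT prog db α ≤ MDT prog db α ∧ MDT prog db α ≤ AT prog db α) := by
  classical
  set f : DTree prog db.facts α → K := fun t => t.weight db.ann with hf
  have hUfin := uFacts_finite hprog hfin
  set N := hUfin.toFinset.card with hN
  have hNRfin : {t : DTree prog db.facts α | t.nonRecursive}.Finite := by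
    apply Set.Finite.subset (trees_depth_le_finite hprog hfin N α)
    intro t ht
    have hav : t.avoid ↑(∅ : Finset (Fact P C)) := by
      rw [Finset.coe_empty]; exact ht
    have h := avoid_depth_bound hUfin t ∅ (by simp) hav
    simpa using h
  have hMDfin : {t : DTree prog db.facts α | t.minimalDepth}.Finite := by
    rcases Set.eq_empty_or_nonempty {t : DTree prog db.facts α | t.minimalDepth} with
      he | ⟨t₀, _⟩
    · rw [he]; exact Set.finite_empty
    · exact Set.Finite.subset (trees_depth_le_finite hprog hfin t₀.depth α)
        fun t ht => ht t₀
  have hHMsubMD : {t : DTree prog db.facts α | t.hereditaryMinimal} ⊆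
      {t : DTree prog db.facts α | t.minimalDepth} :=
    fun t ht => hereditaryMinimal_minimalDepth ht
  have hHMsubNR : {t : DTree prog db.facts α | t.hereditaryMinimal} ⊆
      {t : DTree prog db.facts α | t.nonRecursive} := by
    intro t ht
    exact hereditaryMinimal_avoid t ht ∅ (by simp)
  have hHMfin := hMDfin.subset hHMsubMD
  have eHM : HMDT prog db α = ∑ t ∈ hHMfin.toFinset, f t := finsum_cond_eq_sum f _ hHMfin
  have eMD : MDT prog db α = ∑ t ∈ hMDfin.toFinset, f t := finsum_cond_eq_sum f _ hMDfin
  have eNR : NRT prog db α = ∑ t ∈ hNRfin.toFinset, f t := finsum_cond_eq_sum f _ hNRfin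
  set g : ℕ → K := fun n => ∑ t ∈ (trees_depth_le_finite hprog hfin n α).toFinset, f t with hg
  have gmono : Monotone g := by
    intro n m hnm
    apply sum_le_sum_of_subset' _ f
    intro t ht
    rw [Set.Finite.mem_toFinset] at ht ⊢
    exact le_trans ht hnm
  obtain ⟨L, hL⟩ := OmegaCommSemiring.chain_lub g gmono
  have hLub : IsLUB (partialSums (Set.univ : Set (DTree prog db.facts α)) f) L := by
    constructor
    · rintro x ⟨F, _, rfl⟩
      set m := F.sup (fun t => t.depth) with hm
      have hFsub : F ⊆ (trees_depth_le_finite hprog hfin m α).toFinset := by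
        intro t ht
        rw [Set.Finite.mem_toFinset]
        exact Finset.le_sup (f := fun t : DTree prog db.facts α => t.depth) ht
      exact le_trans (sum_le_sum_of_subset' hFsub f) (hL.1 ⟨m, rfl⟩)
    · intro b hb
      apply hL.2
      rintro x ⟨n, rfl⟩
      exact hb ⟨(trees_depth_le_finite hprog hfin n α).toFinset, by simp, rfl⟩
  have eAT : AT prog db α = L := by
    rw [AT, setSum, dif_pos ⟨L, hLub⟩]
    exact IsLUB.unique (Exists.choose_spec (⟨L, hLub⟩ :
      ∃ s, IsLUB (partialSums (Set.univ : Set (DTree prog db.facts α)) f) s)) hLub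
  have hle : ∀ (S : Set (DTree prog db.facts α)) (hS : S.Finite),
      (∑ t ∈ hS.toFinset, f t) ≤ L := fun S hS => hLub.1 ⟨hS.toFinset, by simp, rfl⟩
  have h1 : HMDT prog db α ≤ NRT prog db α := by
    rw [eHM, eNR]
    refine sum_le_sum_of_subset' ?_ f
    intro t ht
    rw [Set.Finite.mem_toFinset] at ht ⊢
    exact hHMsubNR ht
  have h2 : HMDT prog db α ≤ MDT prog db α := by
    rw [eHM, eMD]
    refine sum_le_sum_of_subset' ?_ f
    intro t ht
    rw [Set.Finite.mem_toFinset] at ht ⊢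
    exact hHMsubMD ht
  have h3 : NRT prog db α ≤ AT prog db α := by
    rw [eNR, eAT]; exact hle _ hNRfin
  have h4 : MDT prog db α ≤ AT prog db α := by
    rw [eMD, eAT]; exact hle _ hMDfin
  exact ⟨⟨h1, h3⟩, ⟨h2, h4⟩⟩

end Datalog
end

section
/- For every Datalog program Σ, annotated database (D,K,λ) with K a commutative ω-continuous semiring, every i ≥ 0, and every fact α belonging to the i-th naive evaluation stage I_n^i, the annotation satisfies λ_n^i(α) = Σ_{t ∈ T(α), depth(t) ≤ i} Λ(t). -/
attribute [local instance] Classical.propDecidable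

namespace Datalog

variable {P C K : Type}

section Statement13Aux

variable {prog : Set (Rule P C)} {D : Set (Fact P C)}

lemma dbConsts_finite {D : Set (Fact P C)} (h : D.Finite) : (dbConsts D).Finite := by
  have he : dbConsts D = ⋃ a ∈ D, {c | c ∈ a.args} := by
    ext c; simp [dbConsts]
  rw [he]
  exact h.biUnion fun a _ => a.args.finite_toSet

lemma sigma_mem_consts {r : Rule P C} {σ : Fin r.nvars → C} {I : Set (Fact P C)}
    (hb : ∀ j, (r.body j).subst σ ∈ I) (v : Fin r.nvars) : σ v ∈ dbConsts I := by
  obtain ⟨j, hj⟩ := r.vars_in_body v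
  exact ⟨(r.body j).subst σ, hb j, List.mem_map_of_mem hj⟩

lemma pairs_finite (hprog : prog.Finite) {S : Set C} (hS : S.Finite) :
    {p : (r : Rule P C) × (Fin r.nvars → C) | p.1 ∈ prog ∧ ∀ v, p.2 v ∈ S}.Finite := by
  have hsub : {p : (r : Rule P C) × (Fin r.nvars → C) | p.1 ∈ prog ∧ ∀ v, p.2 v ∈ S} ⊆
      ⋃ r ∈ prog, Sigma.mk r '' {σ : Fin r.nvars → C | ∀ v, σ v ∈ S} := by
    rintro ⟨r, σ⟩ ⟨h1, h2⟩
    exact Set.mem_biUnion h1 ⟨σ, h2, rfl⟩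
  refine Set.Finite.subset (hprog.biUnion fun r _ => Set.Finite.image _ ?_) hsub
  have he : {σ : Fin r.nvars → C | ∀ v, σ v ∈ S} = Set.pi Set.univ (fun _ => S) := by
    ext σ; simp [Set.mem_pi]
  rw [he]
  exact Set.Finite.pi fun _ => hS

lemma derivable_finite (hprog : prog.Finite) {I : Set (Fact P C)} (hI : I.Finite) :
    (derivable prog I).Finite := by
  have h := (pairs_finite hprog (dbConsts_finite hI)).image
      (fun p : (r : Rule P C) × (Fin r.nvars → C) => p.1.head.subst p.2)
  refine h.subset ?_
  rintro a ⟨r, hr, σ, hb, rfl⟩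
  exact ⟨⟨r, σ⟩, ⟨hr, fun v => sigma_mem_consts hb v⟩, rfl⟩

variable [CommSemiring K]

lemma naive_succ_facts (prog : Set (Rule P C)) (db : AnnDB P C K) (i : ℕ) :
    (naiveSeq prog db (i+1)).facts = derivable prog (naiveSeq prog db i).facts ∪ db.facts := rfl

lemma naive_succ_ann (prog : Set (Rule P C)) (db : AnnDB P C K) (i : ℕ) (α : Fact P C) :
    (naiveSeq prog db (i+1)).ann α =
      (Tcons prog (naiveSeq prog db i)).ann α + db.ann α := rfl

lemma naive_facts_finite (hprog : prog.Finite) (db : AnnDB P C K) (hfin : db.facts.Finite) :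
    ∀ i, ((naiveSeq prog db i).facts).Finite
  | 0 => hfin
  | i+1 => by
      rw [naive_succ_facts]
      exact (derivable_finite hprog (naive_facts_finite hprog db hfin i)).union hfin

/-- The data of a node: a rule together with a homomorphism whose head yields `α`,
and a family of children trees. -/
structure NData (prog : Set (Rule P C)) (D : Set (Fact P C)) (α : Fact P C) : Type where
  p : (r : Rule P C) × (Fin r.nvars → C)
  hr : p.1 ∈ prog
  hh : p.1.head.subst p.2 = α
  ch : ∀ j, DTree prog D ((p.1.body j).subst p.2)

/-- A derivation tree is either a leaf or a node. -/
def treeEquiv {α : Fact P C} : DTree prog D α ≃ PLift (α ∈ D) ⊕ NData prog D α where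
  toFun t :=
    match t with
    | .leaf _ ha => .inl ⟨ha⟩
    | .node r hr σ ch => .inr ⟨⟨r, σ⟩, hr, rfl, ch⟩
  invFun x :=
    match x with
    | .inl h => .leaf α h.down
    | .inr d => d.hh ▸ .node d.p.1 d.hr d.p.2 d.ch
  left_inv t := by cases t <;> rfl
  right_inv x := by
    rcases x with h | ⟨⟨r, σ⟩, hr, hh, ch⟩
    · rfl
    · dsimp only
      subst hh
      rfl

lemma treeEquiv_leaf {α : Fact P C} (h : α ∈ D) :
    treeEquiv (DTree.leaf α h : DTree prog D α) = Sum.inl ⟨h⟩ := rfl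

lemma treeEquiv_node (r : Rule P C) (hr : r ∈ prog) (σ : Fin r.nvars → C)
    (ch : ∀ i : Fin r.nbody, DTree prog D ((r.body i).subst σ)) :
    treeEquiv (DTree.node r hr σ ch) = Sum.inr ⟨⟨r, σ⟩, hr, rfl, ch⟩ := rfl

lemma NData.eta {α : Fact P C} (d : NData prog D α) (h1 : d.p.1 ∈ prog)
    (h2 : d.p.1.head.subst d.p.2 = α) : (⟨d.p, h1, h2, d.ch⟩ : NData prog D α) = d := rfl

lemma depth_invnode {α : Fact P C} (d : NData prog D α) :
    (treeEquiv.symm (Sum.inr d)).depth = (Finset.univ.sup fun j => (d.ch j).depth) + 1 := by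
  obtain ⟨⟨r, σ⟩, hr, hh, ch⟩ := d
  subst hh
  rfl

lemma weight_invnode (lam : Fact P C → K) {α : Fact P C} (d : NData prog D α) :
    (treeEquiv.symm (Sum.inr d)).weight lam = ∏ j, (d.ch j).weight lam := by
  obtain ⟨⟨r, σ⟩, hr, hh, ch⟩ := d
  subst hh
  rfl

lemma choose_eq_of_inr {α : Fact P C} {t : DTree prog D α}
    (hex : ∃ d, treeEquiv t = Sum.inr d) (d' : NData prog D α)
    (h' : treeEquiv t = Sum.inr d') : Classical.choose hex = d' :=
  Sum.inr_injective ((Classical.choose_spec hex).symm.trans h')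

lemma mem_naive_iff_tree (prog : Set (Rule P C)) (db : AnnDB P C K) :
    ∀ (i : ℕ) (α : Fact P C), α ∈ (naiveSeq prog db i).facts ↔
      ∃ t : DTree prog db.facts α, t.depth ≤ i := by
  intro i
  induction i with
  | zero =>
    intro α
    constructor
    · intro h; exact ⟨.leaf α h, le_refl 0⟩
    · rintro ⟨t, ht⟩
      cases t with
      | leaf a ha => exact ha
      | node r hr σ ch => simp [DTree.depth] at ht
  | succ i ih =>
    intro α
    rw [naive_succ_facts]
    constructor
    · rintro (⟨r, hr, σ, hb, hh⟩ | h)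
      · subst hh
        choose t ht using fun j => (ih _).mp (hb j)
        refine ⟨.node r hr σ t, ?_⟩
        have hs : (Finset.univ.sup fun j => (t j).depth) ≤ i := Finset.sup_le fun j _ => ht j
        exact Nat.add_le_add_right hs 1
      · exact ⟨.leaf _ h, Nat.zero_le _⟩
    · rintro ⟨t, ht⟩
      cases t with
      | leaf a ha => exact Or.inr ha
      | node r hr σ ch =>
        refine Or.inl ⟨r, hr, σ, fun j => (ih _).mpr ⟨ch j, ?_⟩, rfl⟩
        have hs : (Finset.univ.sup fun j => (ch j).depth) ≤ i := by
          have : (Finset.univ.sup fun j => (ch j).depth) + 1 ≤ i + 1 := ht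
          omega
        exact le_trans (Finset.le_sup (f := fun j => (ch j).depth) (Finset.mem_univ j)) hs

lemma trees_finite (hprog : prog.Finite) (db : AnnDB P C K) (hfin : db.facts.Finite) :
    ∀ (i : ℕ) (β : Fact P C), {t : DTree prog db.facts β | t.depth ≤ i}.Finite := by
  intro i
  induction i with
  | zero =>
    intro β
    apply Set.Subsingleton.finite
    intro t ht t' ht'
    cases t with
    | leaf a ha =>
      cases t' with
      | leaf a' ha' => rfl
      | node r hr σ ch => simp [DTree.depth] at ht'
    | node r hr σ ch => simp [DTree.depth] at ht
  | succ i ih =>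
    intro α
    have hS : (dbConsts ((naiveSeq prog db i).facts)).Finite :=
      dbConsts_finite (naive_facts_finite hprog db hfin i)
    have hP : {p : (r : Rule P C) × (Fin r.nvars → C) | p.1 ∈ prog ∧
        ∀ v, p.2 v ∈ dbConsts ((naiveSeq prog db i).facts)}.Finite := pairs_finite hprog hS
    have hND : {d : NData prog db.facts α |
        (∀ v, d.p.2 v ∈ dbConsts ((naiveSeq prog db i).facts)) ∧
        ∀ j, (d.ch j).depth ≤ i}.Finite := by
      rw [← Set.finite_coe_iff]
      haveI h1 : Finite {p : (r : Rule P C) × (Fin r.nvars → C) // p.1 ∈ prog ∧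
          ∀ v, p.2 v ∈ dbConsts ((naiveSeq prog db i).facts)} := hP.to_subtype
      haveI h2 : ∀ β : Fact P C, Finite {t : DTree prog db.facts β // t.depth ≤ i} := fun β =>
        Set.finite_coe_iff.mpr (ih β)
      haveI h3 : ∀ q : {p : (r : Rule P C) × (Fin r.nvars → C) // p.1 ∈ prog ∧
          ∀ v, p.2 v ∈ dbConsts ((naiveSeq prog db i).facts)},
          Finite (∀ j : Fin q.1.1.nbody,
            {t : DTree prog db.facts ((q.1.1.body j).subst q.1.2) // t.depth ≤ i}) := fun q =>
        Pi.finite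
      refine Finite.of_injective
        (β := Σ q : {p : (r : Rule P C) × (Fin r.nvars → C) // p.1 ∈ prog ∧
            ∀ v, p.2 v ∈ dbConsts ((naiveSeq prog db i).facts)},
          ∀ j : Fin q.1.1.nbody,
            {t : DTree prog db.facts ((q.1.1.body j).subst q.1.2) // t.depth ≤ i})
        (fun d => ⟨⟨d.1.p, d.1.hr, d.2.1⟩, fun j => ⟨d.1.ch j, d.2.2 j⟩⟩) ?_
      rintro ⟨⟨p, hr, hh, ch⟩, hc⟩ ⟨⟨p', hr', hh', ch'⟩, hc'⟩ heq
      injection heq with e1 e2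
      injection e1 with e0
      obtain rfl : p = p' := e0
      have hch : ch = ch' := by
        funext j
        exact congrArg Subtype.val (congrFun (eq_of_heq e2) j)
      subst hch
      rfl
    have hsub : {t : DTree prog db.facts α | t.depth ≤ i+1} ⊆
        (treeEquiv.symm) ''
          (Sum.inl '' (Set.univ : Set (PLift (α ∈ db.facts))) ∪
           Sum.inr '' {d : NData prog db.facts α |
             (∀ v, d.p.2 v ∈ dbConsts ((naiveSeq prog db i).facts)) ∧
             ∀ j, (d.ch j).depth ≤ i}) := by
      intro t ht
      cases hx : treeEquiv t with
      | inl h =>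
        refine ⟨Sum.inl h, Or.inl ⟨h, trivial, rfl⟩, ?_⟩
        rw [← hx]
        exact Equiv.symm_apply_apply _ _
      | inr d =>
        have hteq : t = treeEquiv.symm (Sum.inr d) := by rw [← hx, Equiv.symm_apply_apply]
        have hdep : ∀ j, (d.ch j).depth ≤ i := by
          intro j
          have h5 : t.depth ≤ i + 1 := ht
          rw [hteq, depth_invnode] at h5
          have h6 : (Finset.univ.sup fun j => (d.ch j).depth) ≤ i := by omega
          exact le_trans (Finset.le_sup (f := fun j => (d.ch j).depth) (Finset.mem_univ j)) h6
        refine ⟨Sum.inr d, Or.inr ⟨d, ⟨?_, hdep⟩, rfl⟩, hteq.symm⟩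
        intro v
        refine sigma_mem_consts (I := (naiveSeq prog db i).facts) ?_ v
        intro j
        exact (mem_naive_iff_tree prog db i _).mpr ⟨d.ch j, hdep j⟩
    refine Set.Finite.subset (Set.Finite.image _ (Set.Finite.union ?_ (hND.image _))) hsub
    exact Set.Finite.image _ (Set.subsingleton_univ.finite)

end Statement13Aux

section Statement13Main

variable {prog : Set (Rule P C)} [CommSemiring K]

lemma ann_eq_treeSum (hprog : prog.Finite) (db : AnnDB P C K) (hfin : db.facts.Finite) :
    ∀ (i : ℕ) (α : Fact P C), (naiveSeq prog db i).ann α =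
      ∑ᶠ (t : DTree prog db.facts α) (_ : t.depth ≤ i), t.weight db.ann := by
  intro i
  induction i with
  | zero =>
    intro α
    by_cases h : α ∈ db.facts
    · have hset : {t : DTree prog db.facts α | t.depth ≤ 0} = {DTree.leaf α h} := by
        ext t
        simp only [Set.mem_setOf_eq, Set.mem_singleton_iff]
        constructor
        · intro ht
          cases t with
          | leaf a ha => rfl
          | node r hr σ ch => simp [DTree.depth] at ht
        · rintro rfl; exact le_refl 0
      have h2 : (∑ᶠ (t : DTree prog db.facts α) (_ : t.depth ≤ 0), t.weight db.ann)
          = ∑ᶠ t ∈ ({DTree.leaf α h} : Set (DTree prog db.facts α)), t.weight db.ann := by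
        rw [← hset]
        rfl
      rw [h2, finsum_mem_singleton]
      rfl
    · have hset : {t : DTree prog db.facts α | t.depth ≤ 0} = ∅ := by
        ext t
        simp only [Set.mem_setOf_eq, Set.mem_empty_iff_false, iff_false]
        intro ht
        cases t with
        | leaf a ha => exact h ha
        | node r hr σ ch => simp [DTree.depth] at ht
      have h2 : (∑ᶠ (t : DTree prog db.facts α) (_ : t.depth ≤ 0), t.weight db.ann)
          = ∑ᶠ t ∈ (∅ : Set (DTree prog db.facts α)), t.weight db.ann := by
        rw [← hset]
        rfl
      rw [h2, finsum_mem_empty]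
      exact db.ann_eq_zero α h
  | succ i ih =>
    intro α
    have hTFs : ∀ (n : ℕ) (β : Fact P C), {t : DTree prog db.facts β | t.depth ≤ n}.Finite :=
      trees_finite hprog db hfin
    -- RHS as a Finset sum
    have hRHS : (∑ᶠ (t : DTree prog db.facts α) (_ : t.depth ≤ i+1), t.weight db.ann)
        = ∑ t ∈ (hTFs (i+1) α).toFinset, t.weight db.ann :=
      finsum_mem_eq_finite_toFinset_sum _ (hTFs (i+1) α)
    have hmemTF : ∀ (n : ℕ) (β : Fact P C) (t : DTree prog db.facts β),
        t ∈ (hTFs n β).toFinset ↔ t.depth ≤ n := by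
      intro n β t; rw [Set.Finite.mem_toFinset]; rfl
    -- split into node part and leaf part
    have hsplit : ∑ t ∈ (hTFs (i+1) α).toFinset, t.weight db.ann =
        (∑ t ∈ (hTFs (i+1) α).toFinset.filter
            (fun t => ∃ d, treeEquiv t = Sum.inr d), t.weight db.ann)
        + ∑ t ∈ (hTFs (i+1) α).toFinset.filter
            (fun t => ¬ ∃ d, treeEquiv t = Sum.inr d), t.weight db.ann :=
      (Finset.sum_filter_add_sum_filter_not _ _ _).symm
    -- leaf part
    have hleaf : ∑ t ∈ (hTFs (i+1) α).toFinset.filter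
        (fun t => ¬ ∃ d, treeEquiv t = Sum.inr d), t.weight db.ann = db.ann α := by
      by_cases h : α ∈ db.facts
      · have hflt : (hTFs (i+1) α).toFinset.filter
            (fun t => ¬ ∃ d, treeEquiv t = Sum.inr d) = {DTree.leaf α h} := by
          ext t
          simp only [Finset.mem_filter, Finset.mem_singleton, hmemTF]
          constructor
          · rintro ⟨ht, hnd⟩
            cases t with
            | leaf a ha => rfl
            | node r hr σ ch => exact absurd ⟨_, treeEquiv_node r hr σ ch⟩ hnd
          · rintro rfl
            refine ⟨Nat.zero_le _, ?_⟩
            rintro ⟨d, hd⟩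
            rw [treeEquiv_leaf] at hd
            exact Sum.inl_ne_inr hd
        rw [hflt, Finset.sum_singleton]
        rfl
      · have hflt : (hTFs (i+1) α).toFinset.filter
            (fun t => ¬ ∃ d, treeEquiv t = Sum.inr d) = ∅ := by
          rw [Finset.eq_empty_iff_forall_notMem]
          intro t ht
          obtain ⟨_, hnd⟩ := Finset.mem_filter.mp ht
          cases t with
          | leaf a ha => exact h ha
          | node r hr σ ch => exact hnd ⟨_, treeEquiv_node r hr σ ch⟩
        rw [hflt, Finset.sum_empty, db.ann_eq_zero α h]
    -- the finite set of rule instances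
    have hPfin : {p : (r : Rule P C) × (Fin r.nvars → C) | p.1 ∈ prog ∧
        (∀ j, (p.1.body j).subst p.2 ∈ (naiveSeq prog db i).facts) ∧
        p.1.head.subst p.2 = α}.Finite := by
      refine (pairs_finite hprog (dbConsts_finite (naive_facts_finite hprog db hfin i))).subset ?_
      rintro ⟨r, σ⟩ ⟨h1, h2, h3⟩
      exact ⟨h1, fun v => sigma_mem_consts h2 v⟩
    -- Tcons as a Finset sum
    have hT : (Tcons prog (naiveSeq prog db i)).ann α =
        ∑ p ∈ hPfin.toFinset, ∏ j, (naiveSeq prog db i).ann ((p.1.body j).subst p.2) := by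
      by_cases hd : α ∈ derivable prog (naiveSeq prog db i).facts
      · have h1 : (Tcons prog (naiveSeq prog db i)).ann α =
            ruleSum prog (naiveSeq prog db i).facts (naiveSeq prog db i).ann α := if_pos hd
        rw [h1, ruleSum]
        exact finsum_mem_eq_finite_toFinset_sum _ hPfin
      · have h1 : (Tcons prog (naiveSeq prog db i)).ann α = 0 := if_neg hd
        have h2 : hPfin.toFinset = ∅ := by
          rw [Finset.eq_empty_iff_forall_notMem]
          intro p hp
          rw [Set.Finite.mem_toFinset] at hp
          exact hd ⟨p.1, hp.1, p.2, hp.2.1, hp.2.2⟩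
        rw [h1, h2, Finset.sum_empty]
    -- rewrite each body annotation via the induction hypothesis
    have hbody : ∀ p ∈ hPfin.toFinset,
        (∏ j, (naiveSeq prog db i).ann ((p.1.body j).subst p.2)) =
        ∑ c ∈ Fintype.piFinset (fun j => (hTFs i ((p.1.body j).subst p.2)).toFinset),
          ∏ j, (c j).weight db.ann := by
      intro p _
      rw [← Finset.prod_univ_sum]
      refine Finset.prod_congr rfl fun j _ => ?_
      rw [ih ((p.1.body j).subst p.2)]
      exact finsum_mem_eq_finite_toFinset_sum _ (hTFs i _)
    -- node part equals the Tcons sum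
    have hnode : ∑ t ∈ (hTFs (i+1) α).toFinset.filter
        (fun t => ∃ d, treeEquiv t = Sum.inr d), t.weight db.ann =
        ∑ p ∈ hPfin.toFinset, ∏ j, (naiveSeq prog db i).ann ((p.1.body j).subst p.2) := by
      rw [Finset.sum_congr rfl hbody, Finset.sum_sigma']
      symm
      refine Finset.sum_bij'
        (fun (x : Σ p : (r : Rule P C) × (Fin r.nvars → C),
            ∀ j : Fin p.1.nbody, DTree prog db.facts ((p.1.body j).subst p.2)) hx =>
          treeEquiv.symm (Sum.inr ⟨x.1,
            ((Set.Finite.mem_toFinset hPfin).mp (Finset.mem_sigma.mp hx).1).1,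
            ((Set.Finite.mem_toFinset hPfin).mp (Finset.mem_sigma.mp hx).1).2.2, x.2⟩))
        (fun t ht => ⟨(Classical.choose (Finset.mem_filter.mp ht).2).p,
            (Classical.choose (Finset.mem_filter.mp ht).2).ch⟩)
        ?_ ?_ ?_ ?_ ?_
      · -- maps into the filter
        intro x hx
        obtain ⟨hx1, hx2⟩ := Finset.mem_sigma.mp hx
        rw [Finset.mem_filter]
        constructor
        · rw [hmemTF, depth_invnode]
          refine Nat.add_le_add_right (Finset.sup_le fun j _ => ?_) 1
          have h5 := (Fintype.mem_piFinset.mp hx2) j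
          rw [hmemTF] at h5
          exact h5
        · exact ⟨_, Equiv.apply_symm_apply _ _⟩
      · -- maps back into the sigma finset
        intro t ht
        obtain ⟨htf, hex⟩ := Finset.mem_filter.mp ht
        have hd := Classical.choose_spec hex
        have hteq : t = treeEquiv.symm (Sum.inr (Classical.choose hex)) := by
          rw [← hd, Equiv.symm_apply_apply]
        have hdep : ∀ j, ((Classical.choose hex).ch j).depth ≤ i := by
          intro j
          have h5 : t.depth ≤ i + 1 := (hmemTF _ _ _).mp htf
          rw [hteq, depth_invnode] at h5
          have h6 : (Finset.univ.sup fun j => ((Classical.choose hex).ch j).depth) ≤ i := by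
            omega
          exact le_trans
            (Finset.le_sup (f := fun j => ((Classical.choose hex).ch j).depth)
              (Finset.mem_univ j)) h6
        rw [Finset.mem_sigma]
        constructor
        · rw [Set.Finite.mem_toFinset]
          exact ⟨(Classical.choose hex).hr,
            fun j => (mem_naive_iff_tree prog db i _).mpr ⟨(Classical.choose hex).ch j, hdep j⟩,
            (Classical.choose hex).hh⟩
        · rw [Fintype.mem_piFinset]
          intro j
          rw [hmemTF]
          exact hdep j
      · -- left inverse
        intro x hx
        rw [choose_eq_of_inr _ _ (Equiv.apply_symm_apply treeEquiv (Sum.inr ⟨x.1,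
          ((Set.Finite.mem_toFinset hPfin).mp (Finset.mem_sigma.mp hx).1).1,
          ((Set.Finite.mem_toFinset hPfin).mp (Finset.mem_sigma.mp hx).1).2.2, x.2⟩))]
      · -- right inverse
        intro t ht
        dsimp only
        rw [NData.eta]
        have hd := Classical.choose_spec (Finset.mem_filter.mp ht).2
        rw [← hd, Equiv.symm_apply_apply]
      · -- weights agree
        intro x hx
        rw [weight_invnode]
    rw [naive_succ_ann, hRHS, hsplit, hleaf, hnode, hT]

end Statement13Main

/-- along the naive evaluation, the annotation of a derived fact at stage `i`
is the sum of the annotations of its derivation trees of depth at most `i`. -/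
theorem statement_13 (P C K : Type) [OmegaCommSemiring K]
    (prog : Set (Rule P C)) (hprog : prog.Finite)
    (db : AnnDB P C K) (hfin : db.facts.Finite)
    (hann : ∀ a ∈ db.facts, db.ann a ≠ 0) (i : ℕ) (α : Fact P C)
    (hα : α ∈ (naiveSeq prog db i).facts) :
    (naiveSeq prog db i).ann α =
      ∑ᶠ (t : DTree prog db.facts α) (_ : t.depth ≤ i), t.weight db.ann := by
  exact ann_eq_treeSum hprog db hfin i α

end Datalog
end

section
/- For every Datalog program Σ, annotated database (D,K,λ) with K a commutative ω-continuous semiring, and fact α, the intersection over all K-set-annotated models (I,μ) of Σ and (D,K,λ) of μ(α) equals the set { Λ(t) : t ∈ T(α) }; hence SAM(Σ,D,K,λ,α) = Σ_{k ∈ { Λ(t) : t ∈ T(α) }} k, i.e., SAM is the sum of the distinct annotations of the derivation trees of α. -/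
attribute [local instance] Classical.propDecidable

namespace Datalog

variable {P C K : Type}

section Aux

variable {P C K : Type} [CommSemiring K] {prog : Set (Rule P C)} {db : AnnDB P C K}

theorem mem_of_tree {I : Set (Fact P C)} {μ : Fact P C → Set K}
    (hM : IsSetAnnModel prog db I μ) : ∀ {a : Fact P C}, DTree prog db.facts a → a ∈ I
  | _, .leaf a ha => hM.1 ha
  | _, .node r hr σ ch => (hM.2.2 r hr σ (fun i => mem_of_tree hM (ch i))).1

theorem weight_mem {I : Set (Fact P C)} {μ : Fact P C → Set K}
    (hM : IsSetAnnModel prog db I μ) : ∀ {a : Fact P C} (t : DTree prog db.facts a),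
      t.weight db.ann ∈ μ a
  | _, .leaf a ha => hM.2.1 a ha
  | _, .node r hr σ ch =>
      (hM.2.2 r hr σ (fun i => mem_of_tree hM (ch i))).2
        (fun i => (ch i).weight db.ann) (fun i => weight_mem hM (ch i))

theorem canonical_model :
    IsSetAnnModel prog db { a | Nonempty (DTree prog db.facts a) }
      (fun a => { k | ∃ t : DTree prog db.facts a, t.weight db.ann = k }) := by
  refine ⟨fun a ha => ⟨.leaf a ha⟩, fun a ha => ⟨.leaf a ha, rfl⟩, ?_⟩
  intro r hr σ hbody
  have hch : ∀ i, Nonempty (DTree prog db.facts ((r.body i).subst σ)) := hbody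
  refine ⟨⟨.node r hr σ fun i => (hch i).some⟩, ?_⟩
  intro g hg
  choose t ht using hg
  exact ⟨.node r hr σ t, by simp [DTree.weight, ht]⟩

end Aux

/-- the intersection over all set-annotated models of the annotation set of
`α` is exactly the set of annotations of the derivation trees of `α`; hence `SAM` is the
sum of the distinct annotations of these trees. -/
theorem statement_16 (P C K : Type) [OmegaCommSemiring K]
    (prog : Set (Rule P C)) (hprog : prog.Finite)
    (db : AnnDB P C K) (hfin : db.facts.Finite)
    (hann : ∀ a ∈ db.facts, db.ann a ≠ 0) (α : Fact P C) :
    { k : K | ∀ (I : Set (Fact P C)) (μ : Fact P C → Set K),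
        IsSetAnnModel prog db I μ → k ∈ μ α }
        = { k : K | ∃ t : DTree prog db.facts α, t.weight db.ann = k }
      ∧ SAM prog db α =
          setSum { k : K | ∃ t : DTree prog db.facts α, t.weight db.ann = k } id := by
  have hset : { k : K | ∀ (I : Set (Fact P C)) (μ : Fact P C → Set K),
      IsSetAnnModel prog db I μ → k ∈ μ α }
      = { k : K | ∃ t : DTree prog db.facts α, t.weight db.ann = k } := by
    ext k
    constructor
    · intro hk
      exact hk _ _ canonical_model
    · rintro ⟨t, rfl⟩ I μ hM
      exact weight_mem hM t
  exact ⟨hset, by rw [SAM, hset]⟩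

end Datalog
end
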